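/- Let p be a prime and, for each integer e ≥ 0, let a_{p^e} denote the number of (unital) subrings of R = ℤ[t]/(t³) of additive index p^e. Then in the formal power series ring ℤ⟦Z⟧ one has (∑_{e ≥ 0} a_{p^e} Z^e) · (1 − Z)(1 − p²Z³) = 1 + pZ². -/

import Mathlib

open Polynomial

/-- `R = ℤ[t]/(t³)`. -/
abbrev R3 : Type := ℤ[X] ⧸ Ideal.span ({X ^ 3} : Set ℤ[X])

/-- The number of unital subrings of `ℤ[t]/(t³)` of additive index `n`. -/
noncomputable def numSubrings (n : ℕ) : ℕ :=
  Nat.card {S : Subring R3 // S.toAddSubgroup.index = n}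

namespace Aux13

noncomputable def mk3 : ℤ[X] →+* R3 := Ideal.Quotient.mk _

noncomputable def tt : R3 := mk3 X

lemma mk3_pow_eq (n : ℕ) : mk3 (X ^ n) = tt ^ n := by rw [map_pow]; rfl

lemma mk3_C (z : ℤ) : mk3 (C z) = (z : R3) := by
  rw [show (C z : ℤ[X]) = (z : ℤ[X]) by simp, map_intCast]

lemma mk3_eq_zero {f : ℤ[X]} : mk3 f = 0 ↔ (X ^ 3 : ℤ[X]) ∣ f := by
  rw [show mk3 f = Ideal.Quotient.mk _ f from rfl, Ideal.Quotient.eq_zero_iff_mem,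
    Ideal.mem_span_singleton]

lemma tcube : tt ^ 3 = 0 := by
  rw [← mk3_pow_eq, mk3_eq_zero]

lemma surj (x : R3) : ∃ m a b : ℤ, x = (m : R3) + (a : R3) * tt + (b : R3) * tt ^ 2 := by
  obtain ⟨f, rfl⟩ := Ideal.Quotient.mk_surjective (I := Ideal.span ({X ^ 3} : Set ℤ[X])) x
  show ∃ m a b : ℤ, mk3 f = _
  induction f using Polynomial.induction_on' with
  | add f g hf hg =>
    obtain ⟨m, a, b, h1⟩ := hf
    obtain ⟨m', a', b', h2⟩ := hg
    exact ⟨m + m', a + a', b + b', by rw [map_add, h1, h2]; push_cast; ring⟩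
  | monomial n r =>
    match n with
    | 0 => exact ⟨r, 0, 0, by
        rw [← Polynomial.C_mul_X_pow_eq_monomial, map_mul, mk3_C, mk3_pow_eq]; simp⟩
    | 1 => exact ⟨0, r, 0, by
        rw [← Polynomial.C_mul_X_pow_eq_monomial, map_mul, mk3_C, mk3_pow_eq]; simp⟩
    | 2 => exact ⟨0, 0, r, by
        rw [← Polynomial.C_mul_X_pow_eq_monomial, map_mul, mk3_C, mk3_pow_eq]; simp⟩
    | (n+3) => exact ⟨0, 0, 0, by
        rw [← Polynomial.C_mul_X_pow_eq_monomial, map_mul, mk3_pow_eq,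
          pow_add, tcube, mul_zero, mul_zero]; simp⟩

lemma indep {m a b : ℤ} (h : (m : R3) + (a : R3) * tt + (b : R3) * tt ^ 2 = 0) :
    m = 0 ∧ a = 0 ∧ b = 0 := by
  have hform : (m : R3) + (a : R3) * tt + (b : R3) * tt ^ 2
      = mk3 (C b * X ^ 2 + C a * X + C m) := by
    rw [map_add, map_add, map_mul, map_mul, mk3_pow_eq, show mk3 X = tt from rfl, mk3_C, mk3_C, mk3_C]; ring
  rw [hform, mk3_eq_zero] at h
  have hdeg : (C b * X ^ 2 + C a * X + C m).degree < (X ^ 3 : ℤ[X]).degree := by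
    rw [Polynomial.degree_X_pow]
    exact lt_of_le_of_lt (Polynomial.degree_quadratic_le) (by norm_num)
  have h0 : (C b * X ^ 2 + C a * X + C m : ℤ[X]) = 0 :=
    Polynomial.eq_zero_of_dvd_of_degree_lt h hdeg
  have hco := fun n => congrArg (fun q => Polynomial.coeff q n) h0
  refine ⟨?_, ?_, ?_⟩
  · have := hco 0
    simp only [coeff_add, coeff_C_mul, coeff_X_pow, coeff_C, coeff_X, coeff_zero] at this
    norm_num at this; exact this
  · have := hco 1
    simp only [coeff_add, coeff_C_mul, coeff_X_pow, coeff_C, coeff_X, coeff_zero] at this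
    norm_num at this; exact this
  · have := hco 2
    simp only [coeff_add, coeff_C_mul, coeff_X_pow, coeff_C, coeff_X, coeff_zero] at this
    norm_num at this; exact this

lemma eq3 {m a b m' a' b' : ℤ}
    (h : (m : R3) + (a : R3) * tt + (b : R3) * tt ^ 2
       = (m' : R3) + (a' : R3) * tt + (b' : R3) * tt ^ 2) :
    m = m' ∧ a = a' ∧ b = b' := by
  have h' : ((m - m' : ℤ) : R3) + ((a - a' : ℤ) : R3) * tt + ((b - b' : ℤ) : R3) * tt ^ 2 = 0 := by
    push_cast; linear_combination h
  obtain ⟨h1, h2, h3⟩ := indep h'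
  exact ⟨by omega, by omega, by omega⟩


/-- The subring `ℤ + ℤ(a t + c t²) + ℤ (d t²)`, for `d ∣ a²`. -/
noncomputable def SR (a d c : ℤ) (h : d ∣ a ^ 2) : Subring R3 where
  carrier := {x | ∃ m k l : ℤ, x = (m : R3) + ((k * a : ℤ) : R3) * tt
      + ((k * c + l * d : ℤ) : R3) * tt ^ 2}
  zero_mem' := ⟨0, 0, 0, by push_cast; ring⟩
  one_mem' := ⟨1, 0, 0, by push_cast; ring⟩
  add_mem' := by
    rintro x y ⟨m, k, l, rfl⟩ ⟨m', k', l', rfl⟩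
    exact ⟨m + m', k + k', l + l', by push_cast; ring⟩
  neg_mem' := by
    rintro x ⟨m, k, l, rfl⟩
    exact ⟨-m, -k, -l, by push_cast; ring⟩
  mul_mem' := by
    rintro x y ⟨m, k, l, rfl⟩ ⟨m', k', l', rfl⟩
    obtain ⟨w, hw⟩ := h
    refine ⟨m * m', m * k' + m' * k, m * l' + m' * l + k * k' * w, ?_⟩
    have hw' : ((a : R3)) ^ 2 = (d : R3) * (w : R3) := by exact_mod_cast congrArg Int.cast hw
    have h3 : tt ^ 3 = 0 := tcube
    have h4 : tt ^ 4 = 0 := by rw [show (4 : ℕ) = 3 + 1 from rfl, pow_add, h3, zero_mul]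
    push_cast
    linear_combination (k * a * (k' * c + l' * d) + (k * c + l * d) * k' * a : R3) * h3
      + ((k * c + l * d) * (k' * c + l' * d) : R3) * h4 + (k * k' : R3) * tt ^ 2 * hw'

lemma mem_SR_iff {a d c : ℤ} {h : d ∣ a ^ 2} {m α β : ℤ} :
    ((m : R3) + (α : R3) * tt + (β : R3) * tt ^ 2) ∈ SR a d c h
      ↔ ∃ k l : ℤ, α = k * a ∧ β = k * c + l * d := by
  constructor
  · rintro ⟨m', k, l, hx⟩
    obtain ⟨h1, h2, h3⟩ := eq3 hx
    exact ⟨k, l, h2, h3⟩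
  · rintro ⟨k, l, h1, h2⟩
    exact ⟨m, k, l, by rw [h1, h2]⟩


noncomputable def c0 (x : R3) : ℤ := (surj x).choose
noncomputable def c1 (x : R3) : ℤ := (surj x).choose_spec.choose
noncomputable def c2 (x : R3) : ℤ := (surj x).choose_spec.choose_spec.choose

lemma co_spec (x : R3) : x = (c0 x : R3) + (c1 x : R3) * tt + (c2 x : R3) * tt ^ 2 :=
  (surj x).choose_spec.choose_spec.choose_spec

lemma co_eq {m α β : ℤ} {x : R3} (hx : x = (m : R3) + (α : R3) * tt + (β : R3) * tt ^ 2) :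
    c0 x = m ∧ c1 x = α ∧ c2 x = β :=
  eq3 ((co_spec x).symm.trans hx)

lemma natAbs_cast_zero (a : ℤ) : ((a : ℤ) : ZMod a.natAbs) = 0 := by
  rw [ZMod.intCast_zmod_eq_zero_iff_dvd]
  exact Int.natAbs_dvd.mpr dvd_rfl


lemma index_SR (a d c : ℤ) (h : d ∣ a ^ 2) (ha : a ≠ 0) (hd : d ≠ 0) :
    (SR a d c h).toAddSubgroup.index = a.natAbs * d.natAbs := by
  set H := (SR a d c h).toAddSubgroup with hH
  set A := a.natAbs with hA
  set D := d.natAbs with hD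
  set F : R3 → ZMod A × ZMod D :=
    fun x => (((c1 x : ℤ) : ZMod A), ((c2 x - (c1 x / a) * c : ℤ) : ZMod D)) with hFdef
  have hcong : ∀ x y : R3, -x + y ∈ H → F x = F y := by
    intro x y hxy
    obtain ⟨m, k, l, hs⟩ := hxy
    have hy' : y = ((c0 x + m : ℤ) : R3) + ((c1 x + k * a : ℤ) : R3) * tt
        + ((c2 x + (k * c + l * d) : ℤ) : R3) * tt ^ 2 := by
      have hy : y = x + (-x + y) := by ring
      rw [hs] at hy; rw [hy]; nth_rewrite 1 [co_spec x]; push_cast; ring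
    obtain ⟨h0, h1, h2⟩ := co_eq hy'
    have hdiv : c1 y / a = c1 x / a + k := by rw [h1]; exact Int.add_mul_ediv_right _ _ ha
    have hsnd : c2 y - c1 y / a * c = (c2 x - c1 x / a * c) + l * d := by
      rw [h2, hdiv]; ring
    have fst : ((c1 x : ℤ) : ZMod A) = ((c1 y : ℤ) : ZMod A) := by
      rw [h1]; push_cast; rw [natAbs_cast_zero a]; ring
    have snd : ((c2 x - c1 x / a * c : ℤ) : ZMod D) = ((c2 y - c1 y / a * c : ℤ) : ZMod D) := by
      rw [hsnd]; push_cast; rw [natAbs_cast_zero d]; ring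
    simp only [hFdef, Prod.mk.injEq]
    exact ⟨fst, snd⟩
  have hc1 : ∀ (α β : ℤ), c1 ((α : R3) * tt + (β : R3) * tt ^ 2) = α ∧
      c2 ((α : R3) * tt + (β : R3) * tt ^ 2) = β := by
    intro α β
    have := co_eq (m := 0) (α := α) (β := β)
        (x := (α : R3) * tt + (β : R3) * tt ^ 2) (by push_cast; ring)
    exact ⟨this.2.1, this.2.2⟩
  let f : R3 ⧸ H → ZMod A × ZMod D :=
    Quotient.lift F (fun x y hxy => hcong x y (QuotientAddGroup.leftRel_apply.mp hxy))
  have hfmk : ∀ x : R3, f (QuotientAddGroup.mk x) = F x := fun _ => rfl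
  have hinj : Function.Injective f := by
    intro q1 q2
    refine Quotient.inductionOn₂ q1 q2 ?_
    intro x y hF
    have hfst := congrArg Prod.fst hF
    have hsnd := congrArg Prod.snd hF
    change ((c1 x : ℤ) : ZMod A) = ((c1 y : ℤ) : ZMod A) at hfst
    change ((c2 x - c1 x / a * c : ℤ) : ZMod D) = ((c2 y - c1 y / a * c : ℤ) : ZMod D) at hsnd
    have hdvd1 : a ∣ c1 y - c1 x := by
      rw [← Int.natAbs_dvd, ← ZMod.intCast_zmod_eq_zero_iff_dvd]
      push_cast
      rw [sub_eq_zero]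
      exact hfst.symm
    obtain ⟨k, hk⟩ := hdvd1
    have hdiv : c1 y / a = c1 x / a + k := by
      rw [show c1 y = c1 x + a * k by linarith, Int.add_mul_ediv_left _ _ ha]
    have hdvd2 : d ∣ (c2 y - c2 x) - k * c := by
      rw [← Int.natAbs_dvd, ← ZMod.intCast_zmod_eq_zero_iff_dvd]
      have : ((c2 y - c1 y / a * c : ℤ) : ZMod D) = ((c2 x - c1 x / a * c : ℤ) : ZMod D) :=
        hsnd.symm
      rw [hdiv] at this
      push_cast at this ⊢
      linear_combination this
    obtain ⟨l, hl⟩ := hdvd2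
    have hmem : -x + y ∈ H := by
      have hxy : -x + y = ((c0 y - c0 x : ℤ) : R3) + ((c1 y - c1 x : ℤ) : R3) * tt
          + ((c2 y - c2 x : ℤ) : R3) * tt ^ 2 := by
        nth_rewrite 1 [co_spec x, co_spec y]; push_cast; ring
      rw [show (-x + y ∈ H) = (-x + y ∈ SR a d c h) from rfl, hxy, mem_SR_iff]
      exact ⟨k, l, by linarith, by linarith⟩
    exact QuotientAddGroup.eq.mpr hmem
  have hsurj : Function.Surjective f := by
    rintro ⟨u, v⟩
    obtain ⟨u', hu⟩ := ZMod.intCast_surjective (n := A) u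
    obtain ⟨w, hw⟩ := ZMod.intCast_surjective (n := D) (v + ((u' / a * c : ℤ) : ZMod D))
    refine ⟨QuotientAddGroup.mk ((u' : R3) * tt + (w : R3) * tt ^ 2), ?_⟩
    rw [hfmk]
    obtain ⟨hc1', hc2'⟩ := hc1 u' w
    simp only [hFdef, hc1', hc2', Prod.mk.injEq]
    constructor
    · exact hu
    · push_cast [hw]; push_cast; ring
  have hcard : Nat.card (R3 ⧸ H) = Nat.card (ZMod A × ZMod D) :=
    Nat.card_congr (Equiv.ofBijective f ⟨hinj, hsurj⟩)
  show Nat.card (R3 ⧸ H) = A * D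
  rw [hcard, Nat.card_prod, Nat.card_zmod, Nat.card_zmod]

lemma index_SR_zero_a (d c : ℤ) (h : d ∣ (0:ℤ) ^ 2) :
    (SR 0 d c h).toAddSubgroup.index = 0 := by
  have hinj : Function.Injective
      (fun n : ℤ => (QuotientAddGroup.mk ((n : R3) * tt) : R3 ⧸ (SR 0 d c h).toAddSubgroup)) := by
    intro α β hab
    have := QuotientAddGroup.eq.mp hab
    have hxy : (-((α : R3) * tt) + (β : R3) * tt) = ((0 : ℤ) : R3) + ((β - α : ℤ) : R3) * tt
        + ((0 : ℤ) : R3) * tt ^ 2 := by push_cast; ring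
    rw [show (-((α:R3) * tt) + (β:R3) * tt ∈ (SR 0 d c h).toAddSubgroup)
        = (-((α:R3) * tt) + (β:R3) * tt ∈ SR 0 d c h) from rfl, hxy, mem_SR_iff] at this
    obtain ⟨k, l, h1, h2⟩ := this
    have : β - α = 0 := by rw [h1]; ring
    omega
  haveI : Infinite (R3 ⧸ (SR 0 d c h).toAddSubgroup) := Infinite.of_injective _ hinj
  exact Nat.card_eq_zero_of_infinite

lemma index_SR_zero_d (a c : ℤ) (h : (0:ℤ) ∣ a ^ 2) :
    (SR a 0 c h).toAddSubgroup.index = 0 := by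
  have ha : a = 0 := by
    have := zero_dvd_iff.mp h
    exact pow_eq_zero_iff (n := 2) (by norm_num) |>.mp this
  subst ha
  exact index_SR_zero_a 0 c h


set_option maxHeartbeats 1000000 in
theorem classify (S : Subring R3) :
    ∃ (a d c : ℤ) (h : d ∣ a ^ 2), 0 ≤ a ∧ 0 ≤ d ∧ S = SR a d c h := by
  -- the subgroup of `t`-coefficients
  set Agrp : AddSubgroup ℤ :=
    { carrier := {α | ∃ m β : ℤ, ((m : R3) + (α : R3) * tt + (β : R3) * tt ^ 2) ∈ S}
      zero_mem' := ⟨0, 0, by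
        rw [show ((0:ℤ):R3) + ((0:ℤ):R3) * tt + ((0:ℤ):R3) * tt ^ 2 = 0 by push_cast; ring]
        exact S.zero_mem⟩
      add_mem' := by
        rintro α α' ⟨m, β, hm⟩ ⟨m', β', hm'⟩
        refine ⟨m + m', β + β', ?_⟩
        rw [show ((m + m' :ℤ):R3) + ((α + α' :ℤ):R3) * tt + ((β + β' :ℤ):R3) * tt ^ 2
          = ((m : R3) + (α : R3) * tt + (β : R3) * tt ^ 2)
            + ((m' : R3) + (α' : R3) * tt + (β' : R3) * tt ^ 2) by push_cast; ring]
        exact S.add_mem hm hm'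
      neg_mem' := by
        rintro α ⟨m, β, hm⟩
        refine ⟨-m, -β, ?_⟩
        rw [show ((-m :ℤ):R3) + ((-α :ℤ):R3) * tt + ((-β :ℤ):R3) * tt ^ 2
          = -((m : R3) + (α : R3) * tt + (β : R3) * tt ^ 2) by push_cast; ring]
        exact S.neg_mem hm } with hAgrp
  set Dgrp : AddSubgroup ℤ :=
    { carrier := {β | ((β : R3)) * tt ^ 2 ∈ S}
      zero_mem' := by
        show ((0:ℤ):R3) * tt ^ 2 ∈ S
        rw [show ((0:ℤ):R3) * tt ^ 2 = 0 by push_cast; ring]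
        exact S.zero_mem
      add_mem' := by
        rintro β β' hm hm'
        show ((β + β' :ℤ):R3) * tt ^ 2 ∈ S
        rw [show ((β + β' :ℤ):R3) * tt ^ 2 = (β:R3) * tt ^ 2 + (β':R3) * tt ^ 2 by
          push_cast; ring]
        exact S.add_mem hm hm'
      neg_mem' := by
        rintro β hm
        show ((-β :ℤ):R3) * tt ^ 2 ∈ S
        rw [show ((-β :ℤ):R3) * tt ^ 2 = -((β:R3) * tt ^ 2) by push_cast; ring]
        exact S.neg_mem hm } with hDgrp
  obtain ⟨a₀, ha₀⟩ := Int.subgroup_cyclic Agrp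
  obtain ⟨d₀, hd₀⟩ := Int.subgroup_cyclic Dgrp
  have hAmem : ∀ α : ℤ, α ∈ Agrp ↔ a₀ ∣ α := by
    intro α
    rw [ha₀, AddSubgroup.mem_closure_singleton]
    constructor
    · rintro ⟨n, rfl⟩; exact ⟨n, by rw [zsmul_eq_mul]; push_cast; ring⟩
    · rintro ⟨n, rfl⟩; exact ⟨n, by rw [zsmul_eq_mul]; push_cast; ring⟩
  have hDmem : ∀ β : ℤ, β ∈ Dgrp ↔ d₀ ∣ β := by
    intro β
    rw [hd₀, AddSubgroup.mem_closure_singleton]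
    constructor
    · rintro ⟨n, rfl⟩; exact ⟨n, by rw [zsmul_eq_mul]; push_cast; ring⟩
    · rintro ⟨n, rfl⟩; exact ⟨n, by rw [zsmul_eq_mul]; push_cast; ring⟩
  set a : ℤ := (a₀.natAbs : ℤ) with haDef
  set d : ℤ := (d₀.natAbs : ℤ) with hdDef
  have hadvd : ∀ α : ℤ, a ∣ α ↔ a₀ ∣ α := fun α => Int.natAbs_dvd
  have hddvd : ∀ β : ℤ, d ∣ β ↔ d₀ ∣ β := fun β => Int.natAbs_dvd
  have haA : a ∈ Agrp := (hAmem a).mpr ((hadvd a).mp dvd_rfl)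
  obtain ⟨mw, cw, hw⟩ := haA
  -- w' = a·t + cw·t² ∈ S
  have hw' : ((a : R3) * tt + (cw : R3) * tt ^ 2) ∈ S := by
    have := S.sub_mem hw (intCast_mem S mw)
    rw [show ((mw : R3) + (a : R3) * tt + (cw : R3) * tt ^ 2 - (mw : R3))
      = (a : R3) * tt + (cw : R3) * tt ^ 2 by ring] at this
    exact this
  -- d ∣ a²
  have hsq : ((a ^ 2 : ℤ) : R3) * tt ^ 2 ∈ S := by
    have := S.mul_mem hw' hw'
    rw [show ((a : R3) * tt + (cw : R3) * tt ^ 2) * ((a : R3) * tt + (cw : R3) * tt ^ 2)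
      = ((a ^ 2 : ℤ) : R3) * tt ^ 2
        + (2 * (a:R3) * (cw:R3) + (cw:R3) ^ 2 * tt) * tt ^ 3 by push_cast; ring,
      tcube, mul_zero, add_zero] at this
    exact this
  have h : d ∣ a ^ 2 := (hddvd _).mpr ((hDmem _).mp hsq)
  refine ⟨a, d, cw, h, by positivity, by positivity, ?_⟩
  ext x
  constructor
  · intro hx
    have hc1A : a₀ ∣ c1 x := (hAmem (c1 x)).mp ⟨c0 x, c2 x, by rw [← co_spec x]; exact hx⟩
    obtain ⟨k, hk⟩ := (hadvd (c1 x)).mpr hc1A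
    have hz : ((c2 x - k * cw : ℤ) : R3) * tt ^ 2 ∈ S := by
      have hmem := S.sub_mem (S.sub_mem hx (S.mul_mem (intCast_mem S k) hw'))
        (intCast_mem S (c0 x))
      rw [show x - (k : R3) * ((a : R3) * tt + (cw : R3) * tt ^ 2) - ((c0 x : ℤ) : R3)
        = ((c2 x - k * cw : ℤ) : R3) * tt ^ 2 by
          nth_rewrite 1 [co_spec x]; push_cast [hk]; ring] at hmem
      exact hmem
    obtain ⟨l, hl⟩ := (hddvd _).mpr ((hDmem _).mp hz)
    rw [co_spec x, mem_SR_iff]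
    exact ⟨k, l, by linarith, by linarith⟩
  · rintro ⟨m, k, l, rfl⟩
    have hd2 : (d : R3) * tt ^ 2 ∈ S := (hDmem d).mpr ((hddvd d).mp dvd_rfl)
    have : (m : R3) + ((k * a : ℤ) : R3) * tt + ((k * cw + l * d : ℤ) : R3) * tt ^ 2
        = (m : R3) + (k : R3) * ((a : R3) * tt + (cw : R3) * tt ^ 2)
          + (l : R3) * ((d : R3) * tt ^ 2) := by push_cast; ring
    rw [this]
    exact S.add_mem (S.add_mem (intCast_mem S m) (S.mul_mem (intCast_mem S k) hw'))
      (S.mul_mem (intCast_mem S l) hd2)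


lemma SR_congr {a d c c' : ℤ} (h : d ∣ a ^ 2) (h' : d ∣ a ^ 2) (hcc : d ∣ c - c') :
    SR a d c h = SR a d c' h' := by
  obtain ⟨w, hw⟩ := hcc
  ext x
  constructor
  · rintro ⟨m, k, l, rfl⟩
    refine ⟨m, k, l + k * w, ?_⟩
    have : k * c + l * d = k * c' + (l + k * w) * d := by linear_combination k * hw
    rw [this]
  · rintro ⟨m, k, l, rfl⟩
    refine ⟨m, k, l - k * w, ?_⟩
    have : k * c' + l * d = k * c + (l - k * w) * d := by linear_combination (-k) * hw
    rw [this]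

lemma mem_SR_t2 {a d c : ℤ} {h : d ∣ a ^ 2} (ha : a ≠ 0) (z : ℤ) :
    (z : R3) * tt ^ 2 ∈ SR a d c h ↔ d ∣ z := by
  have hform : (z : R3) * tt ^ 2 = ((0:ℤ) : R3) + ((0:ℤ) : R3) * tt + (z : R3) * tt ^ 2 := by
    push_cast; ring
  rw [hform, mem_SR_iff]
  constructor
  · rintro ⟨k, l, h1, h2⟩
    have hk : k = 0 := by
      rcases mul_eq_zero.mp h1.symm with h | h
      · exact h
      · exact absurd h ha
    exact ⟨l, by rw [h2, hk]; ring⟩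
  · rintro ⟨l, rfl⟩
    exact ⟨0, l, by ring, by ring⟩

lemma mem_SR_w {a d c : ℤ} {h : d ∣ a ^ 2} :
    (a : R3) * tt + (c : R3) * tt ^ 2 ∈ SR a d c h :=
  ⟨0, 1, 0, by push_cast; ring⟩

lemma SR_inj {a d c d' c' : ℤ} {h : d ∣ a ^ 2} {h' : d' ∣ a ^ 2}
    (ha : a ≠ 0) (hd : 0 ≤ d) (hd' : 0 ≤ d')
    (heq : SR a d c h = SR a d' c' h') : d = d' ∧ d ∣ c - c' := by
  have hdd' : d' ∣ d := by
    have : (d : R3) * tt ^ 2 ∈ SR a d c h := (mem_SR_t2 ha d).mpr dvd_rfl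
    rw [heq] at this
    exact (mem_SR_t2 ha d).mp this
  have hd'd : d ∣ d' := by
    have : ((d' : ℤ) : R3) * tt ^ 2 ∈ SR a d' c' h' := (mem_SR_t2 ha d').mpr dvd_rfl
    rw [← heq] at this
    exact (mem_SR_t2 ha d').mp this
  have hdeq : d = d' := Int.dvd_antisymm hd hd' hd'd hdd'
  refine ⟨hdeq, ?_⟩
  have hw : (a : R3) * tt + (c : R3) * tt ^ 2 ∈ SR a d' c' h' := by
    rw [← heq]; exact mem_SR_w
  have hform : (a : R3) * tt + (c : R3) * tt ^ 2
      = ((0:ℤ) : R3) + (a : R3) * tt + (c : R3) * tt ^ 2 := by push_cast; ring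
  rw [hform, mem_SR_iff] at hw
  obtain ⟨k, l, h1, h2⟩ := hw
  have hk : k = 1 := by
    have : (k - 1) * a = 0 := by linarith
    rcases mul_eq_zero.mp this with hh | hh
    · omega
    · exact absurd hh ha
  rw [hk, one_mul] at h2
  exact ⟨l, by rw [hdeq]; linarith⟩


lemma SR_a_dvd {a d c a' d' c' : ℤ} {h : d ∣ a ^ 2} {h' : d' ∣ a' ^ 2}
    (hsub : SR a d c h ≤ SR a' d' c' h') : a' ∣ a := by
  have hw : (a : R3) * tt + (c : R3) * tt ^ 2 ∈ SR a' d' c' h' := hsub mem_SR_w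
  have hform : (a : R3) * tt + (c : R3) * tt ^ 2
      = ((0:ℤ) : R3) + (a : R3) * tt + (c : R3) * tt ^ 2 := by push_cast; ring
  rw [hform, mem_SR_iff] at hw
  obtain ⟨k, l, h1, h2⟩ := hw
  exact ⟨k, by linarith⟩

lemma SR_heq {a a' d d' c c' : ℤ} {h : d ∣ a ^ 2} {h' : d' ∣ a' ^ 2}
    (haa : a = a') (hdd : d = d') (hcc : d ∣ c - c') : SR a d c h = SR a' d' c' h' := by
  subst haa; subst hdd; exact SR_congr h h' hcc

theorem count_subrings (p : ℕ) (hp : p.Prime) (e : ℕ) :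
    numSubrings (p ^ e) = ∑ j ∈ Finset.range (2 * e / 3 + 1), p ^ j := by
  haveI : ∀ n : ℕ, NeZero (p ^ n) := fun n => ⟨pow_ne_zero _ hp.ne_zero⟩
  have hpz : (p : ℤ) ≠ 0 := by exact_mod_cast hp.ne_zero
  have hpow_inj : ∀ x y : ℕ, (p : ℤ) ^ x = (p : ℤ) ^ y → x = y := by
    intro x y hxy
    have : p ^ x = p ^ y := by exact_mod_cast hxy
    exact Nat.pow_right_injective hp.two_le this
  set N := 2 * e / 3 + 1 with hN
  have hdvd : ∀ j : Fin N, ((p : ℤ) ^ (j : ℕ)) ∣ ((p : ℤ) ^ (e - (j : ℕ))) ^ 2 := by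
    intro j
    have hj := j.isLt
    rw [← pow_mul]
    exact pow_dvd_pow _ (by omega)
  set g : (Σ j : Fin N, ZMod (p ^ (j : ℕ))) → {S : Subring R3 // S.toAddSubgroup.index = p ^ e} :=
    fun x => ⟨SR ((p : ℤ) ^ (e - (x.1 : ℕ))) ((p : ℤ) ^ (x.1 : ℕ)) ((x.2.val : ℤ)) (hdvd x.1), by
      have hj := x.1.isLt
      rw [index_SR _ _ _ _ (pow_ne_zero _ hpz) (pow_ne_zero _ hpz)]
      have h1 : ((p : ℤ) ^ (e - (x.1 : ℕ))).natAbs = p ^ (e - (x.1 : ℕ)) := by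
        rw [← Nat.cast_pow, Int.natAbs_natCast]
      have h2 : ((p : ℤ) ^ (x.1 : ℕ)).natAbs = p ^ (x.1 : ℕ) := by
        rw [← Nat.cast_pow, Int.natAbs_natCast]
      rw [h1, h2, ← pow_add]
      congr 1
      omega⟩ with hg
  have hbij : Function.Bijective g := by
    constructor
    · rintro ⟨j, u⟩ ⟨j', u'⟩ hx
      have heq : SR ((p : ℤ) ^ (e - (j : ℕ))) ((p : ℤ) ^ (j : ℕ)) ((u.val : ℤ)) (hdvd j)
          = SR ((p : ℤ) ^ (e - (j' : ℕ))) ((p : ℤ) ^ (j' : ℕ)) ((u'.val : ℤ)) (hdvd j') :=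
        congrArg Subtype.val hx
      have haa : (p : ℤ) ^ (e - (j : ℕ)) = (p : ℤ) ^ (e - (j' : ℕ)) := by
        have h1 : (p : ℤ) ^ (e - (j' : ℕ)) ∣ (p : ℤ) ^ (e - (j : ℕ)) :=
          SR_a_dvd (le_of_eq heq)
        have h2 : (p : ℤ) ^ (e - (j : ℕ)) ∣ (p : ℤ) ^ (e - (j' : ℕ)) :=
          SR_a_dvd (le_of_eq heq.symm)
        exact Int.dvd_antisymm (by positivity) (by positivity) h2 h1
      have hjj : (j : ℕ) = (j' : ℕ) := by
        have := hpow_inj _ _ haa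
        have hj := j.isLt; have hj' := j'.isLt
        omega
      obtain rfl : j = j' := Fin.ext hjj
      obtain ⟨-, hdc⟩ := SR_inj (pow_ne_zero _ hpz) (by positivity) (by positivity) heq
      have huu : u = u' := by
        have hdc' : ((p ^ (j : ℕ) : ℕ) : ℤ) ∣ (u.val : ℤ) - (u'.val : ℤ) := by
          push_cast
          exact_mod_cast hdc
        have h0 : (((u.val : ℤ) - (u'.val : ℤ) : ℤ) : ZMod (p ^ (j : ℕ))) = 0 :=
          (ZMod.intCast_zmod_eq_zero_iff_dvd _ _).mpr hdc'
        push_cast at h0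
        rw [sub_eq_zero] at h0
        rw [← ZMod.natCast_rightInverse u, ← ZMod.natCast_rightInverse u']
        exact_mod_cast h0
      rw [huu]
    · rintro ⟨S, hS⟩
      obtain ⟨a, d, c, h, ha0, hd0, rfl⟩ := classify S
      have hpe : p ^ e ≠ 0 := pow_ne_zero _ hp.ne_zero
      have ha : a ≠ 0 := by
        rintro rfl
        rw [index_SR_zero_a d c h] at hS
        exact hpe hS.symm
      have hd : d ≠ 0 := by
        rintro rfl
        rw [index_SR_zero_d a c h] at hS
        exact hpe hS.symm
      rw [index_SR a d c h ha hd] at hS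
      have hnadvd : a.natAbs ∣ p ^ e := ⟨d.natAbs, hS.symm⟩
      obtain ⟨i, hie, hna⟩ := (Nat.dvd_prime_pow hp).mp hnadvd
      have hnd : d.natAbs = p ^ (e - i) := by
        have hmul : p ^ i * d.natAbs = p ^ e := by rw [← hna]; exact hS
        have hsplit : p ^ e = p ^ i * p ^ (e - i) := by
          rw [← pow_add]; congr 1; omega
        exact Nat.eq_of_mul_eq_mul_left (pow_pos hp.pos i) (hmul.trans hsplit)
      have hj2i : e - i ≤ 2 * i := by
        have : d.natAbs ∣ a.natAbs ^ 2 := by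
          rw [← Int.natAbs_pow]
          exact Int.natAbs_dvd_natAbs.mpr h
        rw [hnd, hna, ← pow_mul, mul_comm i 2] at this
        exact (Nat.pow_dvd_pow_iff_le_right hp.one_lt).mp this
      set j : ℕ := e - i with hjdef
      have hjN : j < N := by omega
      refine ⟨⟨⟨j, hjN⟩, ((c : ZMod (p ^ j)) : ZMod (p ^ j))⟩, ?_⟩
      apply Subtype.ext
      have hA : ((p : ℤ) ^ (e - j)) = a := by
        have hcast := Int.natAbs_of_nonneg ha0
        rw [hna] at hcast
        rw [show e - j = i by omega]
        exact_mod_cast hcast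
      have hD : ((p : ℤ) ^ j) = d := by
        have hcast := Int.natAbs_of_nonneg hd0
        rw [hnd] at hcast
        exact_mod_cast hcast
      have hC : ((p : ℤ) ^ j) ∣ (((c : ZMod (p ^ j)).val : ℤ)) - c := by
        have h0 : ((((c : ZMod (p ^ j)).val : ℤ) - c : ℤ) : ZMod (p ^ j)) = 0 := by
          push_cast
          rw [ZMod.natCast_rightInverse (c : ZMod (p ^ j))]
          ring
        have hdvd0 := (ZMod.intCast_zmod_eq_zero_iff_dvd _ _).mp h0
        exact_mod_cast hdvd0
      show SR ((p : ℤ) ^ (e - j)) ((p : ℤ) ^ j) (((c : ZMod (p ^ j)).val : ℤ))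
          (hdvd ⟨j, hjN⟩) = SR a d c h
      exact SR_heq hA hD hC
  have hcard : numSubrings (p ^ e) = Nat.card (Σ j : Fin N, ZMod (p ^ (j : ℕ))) := by
    unfold numSubrings
    exact (Nat.card_congr (Equiv.ofBijective g hbij)).symm
  rw [hcard, Nat.card_eq_fintype_card, Fintype.card_sigma]
  have hz : ∀ j : Fin N, Fintype.card (ZMod (p ^ (j : ℕ))) = p ^ (j : ℕ) := fun j => ZMod.card _
  rw [Finset.sum_congr rfl (fun j _ => hz j)]
  exact Fin.sum_univ_eq_sum_range (fun j => p ^ j) N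

theorem series (p : ℕ) (hp : p.Prime) :
    (PowerSeries.mk fun e : ℕ => ∑ j ∈ Finset.range (2 * e / 3 + 1), (p : ℤ) ^ j) *
      ((1 - PowerSeries.X) * (1 - (p : PowerSeries ℤ) ^ 2 * PowerSeries.X ^ 3)) =
    1 + (p : PowerSeries ℤ) * PowerSeries.X ^ 2 := by
  classical
  set a : ℕ → ℤ := fun e => ∑ j ∈ Finset.range (2 * e / 3 + 1), (p : ℤ) ^ j with ha
  rw [← map_natCast (PowerSeries.C (R := ℤ)) p]
  have hstep : ∀ n : ℕ, a (n + 1) - a n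
      = if 2 * (n + 1) / 3 = 2 * n / 3 + 1 then (p : ℤ) ^ (2 * (n + 1) / 3) else 0 := by
    intro n
    by_cases hcond : 2 * (n + 1) / 3 = 2 * n / 3 + 1
    · rw [if_pos hcond]
      show (∑ j ∈ Finset.range (2 * (n+1) / 3 + 1), (p : ℤ) ^ j) - _ = _
      rw [show 2 * (n+1) / 3 + 1 = (2 * n / 3 + 1) + 1 by omega, Finset.sum_range_succ, hcond]
      ring
    · rw [if_neg hcond]
      have h0 : 2 * (n+1) / 3 = 2 * n / 3 := by omega
      show (∑ j ∈ Finset.range (2 * (n+1) / 3 + 1), (p : ℤ) ^ j) - _ = _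
      rw [h0]
      exact sub_self _
  ext n
  have hexpand : (PowerSeries.mk a) *
      ((1 - PowerSeries.X) * (1 - (PowerSeries.C (R := ℤ) (p:ℤ)) ^ 2 * PowerSeries.X ^ 3))
      = PowerSeries.mk a - PowerSeries.mk a * PowerSeries.X ^ 1
        - PowerSeries.C (R := ℤ) ((p:ℤ)^2) * (PowerSeries.mk a * PowerSeries.X ^ 3)
        + PowerSeries.C (R := ℤ) ((p:ℤ)^2) * (PowerSeries.mk a * PowerSeries.X ^ 4) := by
    rw [map_pow]
    ring
  rw [hexpand]
  simp only [map_sub, map_add, PowerSeries.coeff_C_mul, PowerSeries.coeff_mul_X_pow',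
    PowerSeries.coeff_mk, PowerSeries.coeff_one, PowerSeries.coeff_X_pow, PowerSeries.coeff_C]
  match n with
  | 0 => norm_num [ha, Finset.sum_range_one]
  | 1 => norm_num [ha, Finset.sum_range_one]
  | 2 =>
    norm_num [ha, show (2:ℕ) * 2 / 3 + 1 = 2 by norm_num,
      Finset.sum_range_succ, Finset.sum_range_one]
  | 3 =>
    norm_num [ha, show (2:ℕ) * 3 / 3 + 1 = 3 by norm_num,
      show (2:ℕ) * 2 / 3 + 1 = 2 by norm_num,
      Finset.sum_range_succ, Finset.sum_range_one]
  | (n+4) =>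
    rw [if_pos (by omega : 1 ≤ n + 4), if_pos (by omega : 3 ≤ n + 4),
      if_pos (by omega : 4 ≤ n + 4), if_neg (by omega : ¬ (n + 4 = 0)),
      if_pos (by omega : 2 ≤ n + 4), if_neg (by omega : ¬ (n + 4 - 2 = 0))]
    rw [show n + 4 - 1 = (n + 3) by omega, show n + 4 - 3 = n + 1 by omega,
      show n + 4 - 4 = n by omega]
    have h1 := hstep (n + 3)
    have h2 := hstep n
    by_cases hc : 2 * (n + 1) / 3 = 2 * n / 3 + 1
    · have hc' : 2 * (n + 3 + 1) / 3 = 2 * (n + 3) / 3 + 1 := by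
        rcases (by omega : n % 3 = 0 ∨ n % 3 = 1 ∨ n % 3 = 2) with h|h|h <;> omega
      rw [if_pos hc] at h2
      rw [if_pos hc', show n + 3 + 1 = n + 4 by omega] at h1
      have hexp : 2 * (n + 4) / 3 = 2 * (n + 1) / 3 + 2 := by
        rcases (by omega : n % 3 = 0 ∨ n % 3 = 1 ∨ n % 3 = 2) with h|h|h <;> omega
      rw [hexp, pow_add] at h1
      linear_combination h1 - (p : ℤ) ^ 2 * h2
    · have hc' : ¬ (2 * (n + 3 + 1) / 3 = 2 * (n + 3) / 3 + 1) := by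
        rcases (by omega : n % 3 = 0 ∨ n % 3 = 1 ∨ n % 3 = 2) with h|h|h <;> omega
      rw [if_neg hc] at h2
      rw [if_neg hc', show n + 3 + 1 = n + 4 by omega] at h1
      linear_combination h1 - (p : ℤ) ^ 2 * h2

end Aux13

theorem stmt13 (p : ℕ) (hp : p.Prime) :
    (PowerSeries.mk fun e : ℕ => (numSubrings (p ^ e) : ℤ)) *
      ((1 - PowerSeries.X) * (1 - (p : PowerSeries ℤ) ^ 2 * PowerSeries.X ^ 3)) =
    1 + (p : PowerSeries ℤ) * PowerSeries.X ^ 2 := by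
  have hmk : (PowerSeries.mk fun e : ℕ => (numSubrings (p ^ e) : ℤ))
      = PowerSeries.mk fun e : ℕ => ∑ j ∈ Finset.range (2 * e / 3 + 1), (p : ℤ) ^ j := by
    ext n
    rw [PowerSeries.coeff_mk, PowerSeries.coeff_mk, Aux13.count_subrings p hp n]
    push_cast
    rfl
  rw [hmk]
  exact Aux13.series p hp
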